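/- Let A be a commutative ring and B an A-algebra that is free of rank n with A-basis ε = (ε_1, …, ε_n). Let μ: B ⊗_A B → B be the multiplication map, J = ker μ, and let δ ∈ Ann(J) be written δ = u_1 ⊗ ε_1 + ⋯ + u_n ⊗ ε_n with u_j ∈ B. Set b = μ(δ). Then the matrix M_b ∈ M_n(A) of multiplication by b in the basis ε satisfies M_b = (Tr_{B/A}(u_i ε_j))_{1≤i,j≤n} = P_u · T_ε, where P_u = (u_{ij}) ∈ M_n(A) is defined by u_i = Σ_j u_{ij} ε_j and T_ε = (Tr_{B/A}(ε_i ε_j))_{1≤i,j≤n} is the trace matrix of the basis. -/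

import Mathlib

open TensorProduct

/-- Let `B` be an `A`-algebra, free of rank `n` as an `A`-module with basis
`ε`.  Let `μ : B ⊗[A] B → B` be the multiplication map, `J = ker μ`, and let
`δ = Σ_i u_i ⊗ ε_i ∈ Ann J`; set `b = μ δ`.  Then the matrix of multiplication by `b` in the
basis `ε` equals `(Tr_{B/A}(u_i ε_j))_{i,j}` and also equals `P_u * T_ε`, where
`P_u = (u_{ij})` is given by `u_i = Σ_j u_{ij} ε_j` and `T_ε = (Tr_{B/A}(ε_i ε_j))_{i,j}`
is the trace matrix of the basis. -/
theorem mul_matrix_eq_trace_matrix_of_mem_annihilator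
    (A B : Type*) [CommRing A] [CommRing B] [Algebra A B]
    (n : ℕ) (ε : Module.Basis (Fin n) A B) (u : Fin n → B)
    (hδ : (∑ i, u i ⊗ₜ[A] ε i) ∈
      (RingHom.ker (Algebra.TensorProduct.lmul' A : B ⊗[A] B →ₐ[A] B)).annihilator) :
    Algebra.leftMulMatrix ε (Algebra.TensorProduct.lmul' A (∑ i, u i ⊗ₜ[A] ε i))
        = Matrix.of (fun i j => Algebra.trace A B (u i * ε j)) ∧
      Algebra.leftMulMatrix ε (Algebra.TensorProduct.lmul' A (∑ i, u i ⊗ₜ[A] ε i))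
        = (Matrix.of fun i j => ε.repr (u i) j) * Algebra.traceMatrix A ε := by
  classical
  -- Key relation: δ kills x⊗1 - 1⊗x
  have key : ∀ x : B, (∑ i, (u i * x) ⊗ₜ[A] ε i) = ∑ i, u i ⊗ₜ[A] (ε i * x) := by
    intro x
    have hmem : (x ⊗ₜ[A] (1 : B) - (1 : B) ⊗ₜ[A] x) ∈
        RingHom.ker (Algebra.TensorProduct.lmul' A : B ⊗[A] B →ₐ[A] B) := by
      simp [RingHom.mem_ker, Algebra.TensorProduct.lmul'_apply_tmul, mul_comm]
    have h0 := Submodule.mem_annihilator.mp hδ _ hmem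
    have h0' : (∑ i, u i ⊗ₜ[A] ε i) * (x ⊗ₜ[A] 1) = (∑ i, u i ⊗ₜ[A] ε i) * (1 ⊗ₜ[A] x) := by
      have := h0
      rw [smul_eq_mul, mul_sub, sub_eq_zero] at this
      exact this
    calc (∑ i, (u i * x) ⊗ₜ[A] ε i)
        = (∑ i, u i ⊗ₜ[A] ε i) * (x ⊗ₜ[A] 1) := by
          rw [Finset.sum_mul]
          exact Finset.sum_congr rfl fun i _ => by
            rw [Algebra.TensorProduct.tmul_mul_tmul, mul_one]
      _ = (∑ i, u i ⊗ₜ[A] ε i) * (1 ⊗ₜ[A] x) := h0'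
      _ = ∑ i, u i ⊗ₜ[A] (ε i * x) := by
          rw [Finset.sum_mul]
          exact Finset.sum_congr rfl fun i _ => by
            rw [Algebra.TensorProduct.tmul_mul_tmul, mul_one]
  -- applying y⊗z ↦ f y • z
  have key2 : ∀ (f : B →ₗ[A] A) (x : B),
      (∑ i, f (u i * x) • ε i) = ∑ i, f (u i) • (ε i * x) := by
    intro f x
    have hc := congrArg (TensorProduct.lift ((LinearMap.lsmul A B).comp f)) (key x)
    simpa [map_sum] using hc
  have hb : (Algebra.TensorProduct.lmul' (S := B) A (∑ i, u i ⊗ₜ[A] ε i)) = ∑ i, u i * ε i := by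
    rw [map_sum]
    exact Finset.sum_congr rfl fun i _ => Algebra.TensorProduct.lmul'_apply_tmul _ _
  -- b = Σ Tr(u i) • ε i
  have hbb' : (∑ i, u i * ε i) = ∑ i, Algebra.trace A B (u i) • ε i := by
    have htr : ∀ y : B, Algebra.trace A B y = ∑ k, ε.repr (y * ε k) k := by
      intro y
      rw [Algebra.trace_eq_matrix_trace ε]
      simp [Matrix.trace, Algebra.leftMulMatrix_eq_repr_mul]
    calc (∑ i, u i * ε i)
        = ∑ i, (∑ k, ε.repr (u i) k • ε k) * ε i := by
          exact Finset.sum_congr rfl fun i _ => by rw [ε.sum_repr (u i)]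
      _ = ∑ k, ∑ i, ε.repr (u i) k • (ε i * ε k) := by
          rw [Finset.sum_comm]
          exact Finset.sum_congr rfl fun i _ => by
            rw [Finset.sum_mul]
            exact Finset.sum_congr rfl fun k _ => by
              rw [smul_mul_assoc, mul_comm]
      _ = ∑ k, ∑ i, (ε.coord k) (u i * ε k) • ε i := by
          exact Finset.sum_congr rfl fun k _ => (key2 (ε.coord k) (ε k)).symm
      _ = ∑ i, Algebra.trace A B (u i) • ε i := by
          rw [Finset.sum_comm]
          exact Finset.sum_congr rfl fun i _ => by
            rw [htr (u i), Finset.sum_smul]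
            exact Finset.sum_congr rfl fun k _ => by rw [Module.Basis.coord_apply]
  -- main entrywise identity
  have hmain : ∀ i j, ε.repr ((∑ i, u i * ε i) * ε j) i = Algebra.trace A B (u i * ε j) := by
    intro i j
    have h1 : ((∑ i, u i * ε i) * ε j) = ∑ i', Algebra.trace A B (u i' * ε j) • ε i' := by
      rw [hbb', Finset.sum_mul]
      rw [show (∑ i', (Algebra.trace A B (u i') • ε i') * ε j)
            = ∑ i', Algebra.trace A B (u i') • (ε i' * ε j) from
          Finset.sum_congr rfl fun i' _ => smul_mul_assoc _ _ _]
      exact (key2 (Algebra.trace A B) (ε j)).symm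
    rw [h1]
    have := ε.repr_sum_self (fun i' => Algebra.trace A B (u i' * ε j))
    calc ε.repr (∑ i', Algebra.trace A B (u i' * ε j) • ε i') i
        = (fun i' => Algebra.trace A B (u i' * ε j)) i := by
          rw [show (ε.repr (∑ i', Algebra.trace A B (u i' * ε j) • ε i') : Fin n → A)
              = fun i' => Algebra.trace A B (u i' * ε j) from this]
      _ = Algebra.trace A B (u i * ε j) := rfl
  have first : Algebra.leftMulMatrix ε (Algebra.TensorProduct.lmul' A (∑ i, u i ⊗ₜ[A] ε i))
      = Matrix.of (fun i j => Algebra.trace A B (u i * ε j)) := by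
    ext i j
    rw [Algebra.leftMulMatrix_eq_repr_mul, hb]
    exact hmain i j
  refine ⟨first, ?_⟩
  rw [first]
  ext i j
  rw [Matrix.mul_apply]
  simp only [Matrix.of_apply, Algebra.traceMatrix_apply, Algebra.traceForm_apply]
  calc Algebra.trace A B (u i * ε j)
      = Algebra.trace A B ((∑ k, ε.repr (u i) k • ε k) * ε j) := by rw [ε.sum_repr (u i)]
    _ = ∑ k, ε.repr (u i) k * Algebra.trace A B (ε k * ε j) := by
        rw [Finset.sum_mul, map_sum]
        exact Finset.sum_congr rfl fun k _ => by
          rw [smul_mul_assoc, LinearMap.map_smul, smul_eq_mul]
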